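/- Under axioms A1–A6 and the comparison hypothesis for all two-fold scaled products Γ^{(1−λ)} × Γ^{(λ)}, for each state X with X₀ ≺ X ≺ X₁ there is a unique λ ∈ [0,1] such that X ∼ ((1−λ)X₀, λX₁); this λ equals sup{λ : ((1−λ)X₀, λX₁) ≺ X} and also inf{λ : X ≺ ((1−λ)X₀, λX₁)}. -/

import Mathlib

/-- The scaled combination `((1-l)A, lB)`, with the conventions at the endpoints. -/
noncomputable def combo {St : Type*} (comp : St → St → St) (scale : ℝ → St → St)
    (A B : St) (l : ℝ) : St :=
  if l = 0 then A else if l = 1 then B else comp (scale (1 - l) A) (scale l B)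

/-- Under A1–A6 and the comparison hypothesis for all two-fold scaled products
`Γ^{(1−λ)} × Γ^{(λ)}`, every `X` with `X₀ ≺ X ≺ X₁` (where `X₀ ≺≺ X₁`) is
adiabatically equivalent to `((1−λ)X₀, λX₁)` for a unique `λ ∈ [0,1]`, and this
`λ` equals `sup{λ : ((1−λ)X₀, λX₁) ≺ X}` and `inf{λ : X ≺ ((1−λ)X₀, λX₁)}`. -/
theorem unique_lambda_of_CH {St : Type*} (prec : St → St → Prop)
    (comp : St → St → St) (scale : ℝ → St → St) (Γ : Set St)
    (comp_comm : ∀ X Y, comp X Y = comp Y X)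
    (comp_assoc : ∀ X Y Z, comp (comp X Y) Z = comp X (comp Y Z))
    (scale_one : ∀ X, scale 1 X = X)
    (scale_scale : ∀ (a b : ℝ) (X : St), 0 < a → 0 < b →
      scale a (scale b X) = scale (a * b) X)
    (scale_comp : ∀ (a : ℝ) (X Y : St), 0 < a →
      scale a (comp X Y) = comp (scale a X) (scale a Y))
    (A1 : ∀ X, prec X X)
    (A2 : ∀ X Y Z, prec X Y → prec Y Z → prec X Z)
    (A3 : ∀ X X' Y Y', prec X X' → prec Y Y' → prec (comp X Y) (comp X' Y'))
    (A4 : ∀ (l : ℝ) (X Y : St), 0 < l → prec X Y → prec (scale l X) (scale l Y))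
    (A5 : ∀ (l : ℝ) (X : St), 0 < l → l < 1 →
      prec X (comp (scale (1 - l) X) (scale l X)) ∧
      prec (comp (scale (1 - l) X) (scale l X)) X)
    (A6 : ∀ (X Y Z₀ Z₁ : St) (ε : ℕ → ℝ), (∀ n, 0 < ε n) →
      Filter.Tendsto ε Filter.atTop (nhds 0) →
      (∀ n, prec (comp X (scale (ε n) Z₀)) (comp Y (scale (ε n) Z₁))) →
      prec X Y)
    -- Comparison hypothesis for all two-fold scaled products Γ^{(1−λ)} × Γ^{(λ)}:
    (CH : ∀ l : ℝ, 0 ≤ l → l ≤ 1 → ∀ A B C D : St, A ∈ Γ → B ∈ Γ → C ∈ Γ → D ∈ Γ →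
      prec (combo comp scale A B l) (combo comp scale C D l) ∨
      prec (combo comp scale C D l) (combo comp scale A B l))
    (X₀ X₁ X : St) (hX₀ : X₀ ∈ Γ) (hX₁ : X₁ ∈ Γ) (hX : X ∈ Γ)
    (href : prec X₀ X₁) (hirr : ¬ prec X₁ X₀)
    (h₀ : prec X₀ X) (h₁ : prec X X₁) :
    ∃ l : ℝ, l ∈ Set.Icc (0:ℝ) 1 ∧
      (prec X (combo comp scale X₀ X₁ l) ∧ prec (combo comp scale X₀ X₁ l) X) ∧
      l = sSup {t | t ∈ Set.Icc (0:ℝ) 1 ∧ prec (combo comp scale X₀ X₁ t) X} ∧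
      l = sInf {t | t ∈ Set.Icc (0:ℝ) 1 ∧ prec X (combo comp scale X₀ X₁ t)} ∧
      ∀ l' ∈ Set.Icc (0:ℝ) 1,
        (prec X (combo comp scale X₀ X₁ l') ∧ prec (combo comp scale X₀ X₁ l') X) →
        l' = l := by
  classical
  -- abbreviation
  set R : ℝ → St := combo comp scale X₀ X₁ with hRdef
  have R0 : R 0 = X₀ := by rw [hRdef]; simp [combo]
  have R1 : R 1 = X₁ := by rw [hRdef]; simp [combo]
  have Rmid : ∀ t : ℝ, t ≠ 0 → t ≠ 1 →
      R t = comp (scale (1 - t) X₀) (scale t X₁) := by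
    intro t h0 h1; rw [hRdef]; simp [combo, h0, h1]
  -- splitting lemma
  have split : ∀ (a b : ℝ) (Y : St), 0 < a → 0 < b →
      prec (scale (a + b) Y) (comp (scale a Y) (scale b Y)) ∧
      prec (comp (scale a Y) (scale b Y)) (scale (a + b) Y) := by
    intro a b Y ha hb
    have hs : 0 < a + b := by linarith
    have hl1 : 0 < b / (a + b) := div_pos hb hs
    have hl2 : b / (a + b) < 1 := (div_lt_one hs).2 (by linarith)
    have h5 := A5 (b / (a + b)) (scale (a + b) Y) hl1 hl2
    have e1 : scale (1 - b / (a + b)) (scale (a + b) Y) = scale a Y := by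
      rw [scale_scale _ _ _ (by linarith) hs]
      congr 1
      field_simp
      ring
    have e2 : scale (b / (a + b)) (scale (a + b) Y) = scale b Y := by
      rw [scale_scale _ _ _ hl1 hs]
      congr 1
      field_simp
    rw [e1, e2] at h5
    exact h5
  have half : ∀ Y : St, prec Y (comp (scale (1/2) Y) (scale (1/2) Y)) ∧
      prec (comp (scale (1/2) Y) (scale (1/2) Y)) Y := by
    intro Y
    have := split (1/2) (1/2) Y one_half_pos one_half_pos
    rwa [show (1/2 : ℝ) + 1/2 = 1 by norm_num, scale_one] at this
  -- cancellation law
  have cancel : ∀ U V W : St, prec (comp U W) (comp V W) → prec U V := by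
    intro U V W h
    have key : ∀ n : ℕ,
        prec (comp U (scale ((1/2 : ℝ)^n) W)) (comp V (scale ((1/2 : ℝ)^n) W)) := by
      intro n
      induction n with
      | zero => rw [pow_zero, scale_one]; exact h
      | succ n ih =>
        set ε : ℝ := (1/2 : ℝ)^n with hεdef
        have hε : 0 < ε := by positivity
        have hsw : scale ((1/2 : ℝ)^(n+1)) W = scale (1/2) (scale ε W) := by
          rw [scale_scale _ _ _ one_half_pos hε]
          congr 1
          rw [pow_succ]; ring
        set z : St := scale (1/2) (scale ε W) with hzdef
        set aU : St := scale (1/2) U with haU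
        set aV : St := scale (1/2) V with haV
        have hA : comp aU z = scale (1/2) (comp U (scale ε W)) := by
          rw [scale_comp _ _ _ one_half_pos]
        have hB : comp aV z = scale (1/2) (comp V (scale ε W)) := by
          rw [scale_comp _ _ _ one_half_pos]
        have hUV : prec (comp aU z) (comp aV z) := by
          rw [hA, hB]; exact A4 _ _ _ one_half_pos ih
        rw [hsw]
        have s1 : prec (comp U z) (comp (comp aU aU) z) := A3 _ _ _ _ (half U).1 (A1 z)
        have s2 : prec (comp (comp aU aU) z) (comp aU (comp aV z)) := by
          rw [comp_assoc]
          exact A3 _ _ _ _ (A1 aU) hUV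
        have s3 : comp aU (comp aV z) = comp aV (comp aU z) := by
          rw [← comp_assoc, comp_comm aU aV, comp_assoc]
        have s4 : prec (comp aV (comp aU z)) (comp aV (comp aV z)) :=
          A3 _ _ _ _ (A1 aV) hUV
        have s5 : prec (comp aV (comp aV z)) (comp V z) := by
          rw [← comp_assoc]
          exact A3 _ _ _ _ (half V).2 (A1 z)
        exact A2 _ _ _ s1 (A2 _ _ _ s2 (s3 ▸ A2 _ _ _ s4 s5))
    exact A6 U V W W _ (fun n => by positivity)
      (tendsto_pow_atTop_nhds_zero_of_lt_one (by norm_num) (by norm_num)) key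
  -- the catalyst identity:  (R t , δ X₁)  ∼  (R (t+δ) , δ X₀)
  have cat : ∀ t δ : ℝ, 0 ≤ t → 0 < δ → t + δ ≤ 1 →
      prec (comp (R t) (scale δ X₁)) (comp (R (t + δ)) (scale δ X₀)) ∧
      prec (comp (R (t + δ)) (scale δ X₀)) (comp (R t) (scale δ X₁)) := by
    intro t δ ht hδ htδ
    -- two congruence helpers
    have compl : ∀ (W : St) {P Q : St}, prec P Q → prec (comp P W) (comp Q W) :=
      fun W _ _ h => A3 _ _ _ _ h (A1 W)
    have compr : ∀ (W : St) {P Q : St}, prec P Q → prec (comp W P) (comp W Q) :=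
      fun W _ _ h => A3 _ _ _ _ (A1 W) h
    rcases eq_or_lt_of_le ht with h0 | h0
    · -- t = 0
      subst h0
      rw [zero_add] at htδ ⊢
      rw [R0]
      rcases eq_or_lt_of_le htδ with h1 | h1
      · -- δ = 1
        rw [h1, R1, scale_one, scale_one, comp_comm X₀ X₁]
        exact ⟨A1 _, A1 _⟩
      · -- δ < 1
        rw [Rmid δ (ne_of_gt hδ) (ne_of_lt h1)]
        have rearr : comp (comp (scale (1 - δ) X₀) (scale δ X₁)) (scale δ X₀)
            = comp (comp (scale (1 - δ) X₀) (scale δ X₀)) (scale δ X₁) := by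
          rw [comp_assoc, comp_assoc, comp_comm (scale δ X₁) (scale δ X₀)]
        have hsum := split (1 - δ) δ X₀ (by linarith) hδ
        rw [show (1 - δ) + δ = 1 by ring, scale_one] at hsum
        rw [rearr]
        exact ⟨compl _ hsum.1, compl _ hsum.2⟩
    · -- 0 < t
      have ht1 : t < 1 := by linarith
      rw [Rmid t (ne_of_gt h0) (ne_of_lt ht1)]
      rcases eq_or_lt_of_le htδ with h1 | h1
      · -- t + δ = 1
        rw [h1, R1]
        have hδeq : δ = 1 - t := by linarith
        subst hδeq
        have hsum := split t (1 - t) X₁ h0 (by linarith)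
        rw [show t + (1 - t) = 1 by ring, scale_one] at hsum
        have e1 : comp (comp (scale (1 - t) X₀) (scale t X₁)) (scale (1 - t) X₁)
            = comp (comp (scale t X₁) (scale (1 - t) X₁)) (scale (1 - t) X₀) := by
          rw [comp_comm (scale (1 - t) X₀) (scale t X₁), comp_assoc,
            comp_comm (scale (1 - t) X₀) (scale (1 - t) X₁), ← comp_assoc]
        rw [e1]
        exact ⟨compl _ hsum.2, compl _ hsum.1⟩
      · -- t + δ < 1
        have htδ0 : t + δ ≠ 0 := by positivity
        rw [Rmid (t + δ) htδ0 (ne_of_lt h1)]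
        have hs1 := split t δ X₁ h0 hδ
        have hs0 := split (1 - (t + δ)) δ X₀ (by linarith) hδ
        rw [show (1 - (t + δ)) + δ = 1 - t by ring] at hs0
        have e1 : comp (comp (scale (1 - t) X₀) (scale t X₁)) (scale δ X₁)
            = comp (scale (1 - t) X₀) (comp (scale t X₁) (scale δ X₁)) := comp_assoc _ _ _
        have e2 : comp (comp (scale (1 - (t + δ)) X₀) (scale (t + δ) X₁)) (scale δ X₀)
            = comp (comp (scale (1 - (t + δ)) X₀) (scale δ X₀)) (scale (t + δ) X₁) := by
          rw [comp_assoc, comp_assoc, comp_comm (scale (t + δ) X₁) (scale δ X₀)]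
        rw [e1, e2]
        exact ⟨A2 _ _ _ (compr _ hs1.2) (compl _ hs0.1),
               A2 _ _ _ (compl _ hs0.2) (compr _ hs1.1)⟩
  -- monotonicity
  have mono : ∀ t t' : ℝ, 0 ≤ t → t ≤ t' → t' ≤ 1 → prec (R t) (R t') := by
    intro t t' ht htt' ht1
    rcases eq_or_lt_of_le htt' with h | h
    · rw [h]; exact A1 _
    · set δ : ℝ := t' - t with hδdef
      have hδ : 0 < δ := by simp [hδdef]; linarith
      have hc := cat t δ ht hδ (by simp [hδdef]; linarith)
      rw [show t + δ = t' by simp [hδdef]] at hc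
      have step : prec (comp (R t) (scale δ X₀)) (comp (R t) (scale δ X₁)) :=
        A3 _ _ _ _ (A1 _) (A4 δ _ _ hδ href)
      exact cancel _ _ _ (A2 _ _ _ step hc.1)
  -- strictness
  have strict : ∀ t t' : ℝ, 0 ≤ t → t < t' → t' ≤ 1 → ¬ prec (R t') (R t) := by
    intro t t' ht htt' ht1 hcon
    set δ : ℝ := t' - t with hδdef
    have hδ : 0 < δ := by simp [hδdef]; linarith
    have hc := cat t δ ht hδ (by simp [hδdef]; linarith)
    rw [show t + δ = t' by simp [hδdef]] at hc
    have : prec (comp (R t) (scale δ X₁)) (comp (R t) (scale δ X₀)) :=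
      A2 _ _ _ hc.1 (A3 _ _ _ _ hcon (A1 _))
    have h10 : prec (scale δ X₁) (scale δ X₀) := by
      have h' : prec (comp (scale δ X₁) (R t)) (comp (scale δ X₀) (R t)) := by
        rw [comp_comm (scale δ X₁) (R t), comp_comm (scale δ X₀) (R t)]
        exact this
      exact cancel _ _ _ h'
    have : prec (scale (1/δ) (scale δ X₁)) (scale (1/δ) (scale δ X₀)) :=
      A4 _ _ _ (by positivity) h10
    rw [scale_scale _ _ _ (by positivity) hδ, scale_scale _ _ _ (by positivity) hδ,
      one_div_mul_cancel (ne_of_gt hδ), scale_one, scale_one] at this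
    exact hirr this
  -- comparability of X with R t
  have compar : ∀ t : ℝ, 0 ≤ t → t ≤ 1 → prec (R t) X ∨ prec X (R t) := by
    intro t ht0 ht1
    have hXX : prec (combo comp scale X X t) X ∧ prec X (combo comp scale X X t) := by
      by_cases h0 : t = 0
      · simp only [combo, if_pos h0]; exact ⟨A1 X, A1 X⟩
      · by_cases h1 : t = 1
        · simp only [combo, if_neg h0, if_pos h1]; exact ⟨A1 X, A1 X⟩
        · have h5 := A5 t X (lt_of_le_of_ne ht0 (Ne.symm h0)) (lt_of_le_of_ne ht1 h1)
          simp only [combo, if_neg h0, if_neg h1]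
          exact ⟨h5.2, h5.1⟩
    rcases CH t ht0 ht1 X₀ X₁ X X hX₀ hX₁ hX hX with h | h
    · exact Or.inl (A2 _ _ _ h hXX.1)
    · exact Or.inr (A2 _ _ _ hXX.2 h)
  -- the set S and its supremum
  set S : Set ℝ := {t | t ∈ Set.Icc (0:ℝ) 1 ∧ prec (combo comp scale X₀ X₁ t) X}
    with hSdef
  have h0S : (0:ℝ) ∈ S := ⟨⟨le_refl 0, zero_le_one⟩, by rw [← hRdef, R0]; exact h₀⟩
  have hSne : S.Nonempty := ⟨0, h0S⟩
  have hSbdd : BddAbove S := ⟨1, fun t ht => ht.1.2⟩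
  set lam : ℝ := sSup S with hlamdef
  have hlam0 : 0 ≤ lam := le_csSup hSbdd h0S
  have hlam1 : lam ≤ 1 := csSup_le hSne (fun t ht => ht.1.2)
  -- everything below lam is in S
  have hbelow : ∀ t : ℝ, 0 ≤ t → t < lam → t ∈ S := by
    intro t ht htlam
    obtain ⟨s, hsS, hts⟩ := exists_lt_of_lt_csSup hSne htlam
    have hs1 : s ≤ 1 := hsS.1.2
    exact ⟨⟨ht, by linarith⟩, A2 _ _ _ (mono t s ht (le_of_lt hts) hs1) hsS.2⟩
  -- everything above lam : X ≺ R t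
  have habove : ∀ t : ℝ, lam < t → t ≤ 1 → prec X (R t) := by
    intro t hlt ht1
    have hnot : ¬ prec (R t) X := by
      intro hc
      exact absurd (le_csSup hSbdd ⟨⟨by linarith, ht1⟩, hc⟩) (not_le.2 hlt)
    rcases compar t (by linarith) ht1 with h | h
    · exact absurd h hnot
    · exact h
  -- a tendsto helper
  have htendc : ∀ c : ℝ, Filter.Tendsto (fun n : ℕ => c * (1/2 : ℝ)^(n+1))
      Filter.atTop (nhds 0) := by
    intro c
    have h := tendsto_pow_atTop_nhds_zero_of_lt_one
      (by norm_num : (0:ℝ) ≤ 1/2) (by norm_num : (1:ℝ)/2 < 1)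
    have h2 := h.comp (Filter.tendsto_add_atTop_nat 1)
    have h3 := h2.const_mul c
    simpa using h3
  -- R lam ≺ X
  have hRlamX : prec (R lam) X := by
    rcases eq_or_lt_of_le hlam0 with h | h
    · rw [← h, R0]; exact h₀
    · -- lam > 0
      refine A6 (R lam) X X₀ X₁ (fun n => lam * (1/2)^(n+1)) (fun n => by positivity)
        (htendc lam) (fun n => ?_)
      set e : ℝ := lam * (1/2)^(n+1) with hedef
      have he : 0 < e := by positivity
      have helam : e < lam := by
        rw [hedef]
        calc lam * (1/2)^(n+1) ≤ lam * (1/2)^(0+1) := by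
              apply mul_le_mul_of_nonneg_left _ (le_of_lt h)
              exact pow_le_pow_of_le_one (by norm_num) (by norm_num) (by omega)
          _ < lam := by rw [zero_add, pow_one]; linarith
      have htS : lam - e ∈ S := hbelow (lam - e) (by linarith) (by linarith)
      have hc := cat (lam - e) e (by linarith) he (by linarith)
      rw [show lam - e + e = lam by ring] at hc
      exact A2 _ _ _ hc.2 (A3 _ _ _ _ htS.2 (A1 _))
  -- X ≺ R lam
  have hXRlam : prec X (R lam) := by
    rcases eq_or_lt_of_le hlam1 with h | h
    · rw [h, R1]; exact h₁
    · refine A6 X (R lam) X₀ X₁ (fun n => (1 - lam) * (1/2)^(n+1))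
        (fun n => mul_pos (by linarith) (by positivity))
        (htendc (1 - lam)) (fun n => ?_)
      set e : ℝ := (1 - lam) * (1/2)^(n+1) with hedef
      have h1l : 0 < 1 - lam := by linarith
      have he : 0 < e := by positivity
      have helam : e < 1 - lam := by
        rw [hedef]
        calc (1 - lam) * (1/2)^(n+1) ≤ (1 - lam) * (1/2)^(0+1) := by
              apply mul_le_mul_of_nonneg_left _ (le_of_lt h1l)
              exact pow_le_pow_of_le_one (by norm_num) (by norm_num) (by omega)
          _ < 1 - lam := by rw [zero_add, pow_one]; linarith
      have hXt : prec X (R (lam + e)) := habove (lam + e) (by linarith) (by linarith)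
      have hc := cat lam e hlam0 he (by linarith)
      exact A2 _ _ _ (A3 _ _ _ _ hXt (A1 _)) hc.2
  -- the infimum set
  set T : Set ℝ := {t | t ∈ Set.Icc (0:ℝ) 1 ∧ prec X (combo comp scale X₀ X₁ t)}
    with hTdef
  have hlamT : lam ∈ T := ⟨⟨hlam0, hlam1⟩, hXRlam⟩
  have hinf : lam = sInf T := by
    apply le_antisymm
    · apply le_csInf ⟨lam, hlamT⟩
      intro t htT
      by_contra hc
      push_neg at hc
      have hXt : prec X (R t) := htT.2
      have : prec (R lam) (R t) := A2 _ _ _ hRlamX hXt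
      exact strict t lam htT.1.1 hc hlam1 this
    · exact csInf_le ⟨0, fun t ht => ht.1.1⟩ hlamT
  -- uniqueness
  refine ⟨lam, ⟨hlam0, hlam1⟩, ⟨hXRlam, hRlamX⟩, hlamdef, hinf, ?_⟩
  intro l' hl' ⟨hXl', hl'X⟩
  by_contra hne
  rcases lt_or_gt_of_ne hne with h | h
  · exact strict l' lam hl'.1 h hlam1 (A2 _ _ _ hRlamX hXl')
  · exact strict lam l' hlam0 h hl'.2 (A2 _ _ _ hl'X hXRlam)
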